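/- For any tuple (n_1,...,n_k) in Z_k (admissible nonnegative tuple with [n_1,...,n_k] = 0) with all entries positive and k ≥ 2, the height satisfies hgt(n) = |n| - 2(k-1), where |n| = n_1 + ... + n_k. -/

import Mathlib

/-- Hirzebruch–Jung continued fraction `[n₁,…,n_k] = n₁ - 1/(n₂ - 1/(⋯ - 1/n_k))`,
evaluated from the right (with the convention `(0 : ℚ)⁻¹ = 0`, so `hjcf [n] = n`). -/
def hjcf : List ℤ → ℚ
  | [] => 0
  | a :: l => (a : ℚ) - (hjcf l)⁻¹

/-- A tuple is admissible if all intermediate denominators `[n_j,…,n_k]` (for `j ≥ 2`)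
are positive. -/
def Admissible (l : List ℤ) : Prop :=
  ∀ j : ℕ, 1 ≤ j → j < l.length → 0 < hjcf (l.drop j)

/-- Strict blowup at the `j`-th term (1-indexed): for `j ≤ r-1` it maps
`(n₁,…,n_r)` to `(n₁,…,n_{j-1}, n_j+1, 1, n_{j+1}+1, …, n_r)`;
for `j = r` it maps `(n₁,…,n_r)` to `(n₁,…,n_{r-1}, n_r+1, 1)`. -/
def psi : ℕ → List ℤ → List ℤ
  | 0, l => l
  | 1, [] => []
  | 1, [a] => [a + 1, 1]
  | 1, a :: b :: t => (a + 1) :: 1 :: (b + 1) :: t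
  | _ + 2, [] => []
  | j + 2, a :: t => a :: psi (j + 1) t

/-- `ReachesIn s a b` : `b` is obtained from `a` by a sequence of `s` strict blowups. -/
inductive ReachesIn : ℕ → List ℤ → List ℤ → Prop
  | refl (l : List ℤ) : ReachesIn 0 l l
  | step {s : ℕ} {a b : List ℤ} (j : ℕ) (hj : 1 ≤ j) (hj' : j ≤ b.length) :
      ReachesIn s a b → ReachesIn (s + 1) a (psi j b)

/-- `uTuple l = (1,2,…,2,1)` of length `l ≥ 2`; `uTuple 1 = (0)`. -/
def uTuple (l : ℕ) : List ℤ :=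
  if l ≤ 1 then [0] else 1 :: (List.replicate (l - 2) 2 ++ [1])

/-- Height: the minimal number of strict blowups needed to reach `n` from some `uTuple l`. -/
noncomputable def hgt (n : List ℤ) : ℕ :=
  sInf {s | ∃ l : ℕ, 1 ≤ l ∧ ReachesIn s (uTuple l) n}

/-- Derived tuple ("new framings after handle slides"): `n'_k = n_k` and
`n'_i = n_i + n'_{i+1} - 2`. -/
def derived : List ℤ → List ℤ
  | [] => []
  | [a] => [a]
  | a :: b :: t => (a + (derived (b :: t)).headI - 2) :: derived (b :: t)

/-- Strict blowdown at the `(j+1)`-st term (the left inverse of `psi j`): it deletes the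
entry at the `(j+1)`-st position and subtracts 1 from each adjacent incremented entry. -/
def bd : ℕ → List ℤ → List ℤ
  | 0, l => l
  | 1, [] => []
  | 1, [a] => [a]
  | 1, [a, _] => [a - 1]
  | 1, a :: _ :: c :: t => (a - 1) :: (c - 1) :: t
  | _ + 2, [] => []
  | j + 2, a :: t => a :: bd (j + 1) t

/-- One strict blowdown at the leftmost possible `1` (an entry `1` not in the first
position); if there is none, do nothing. -/
def leftmostOneStep (l : List ℤ) : List ℤ :=
  match (l.drop 1).findIdx? (fun x => x == 1) with
  | some i => bd (i + 1) l
  | none => l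

-- helpers
lemma hjcf_cons (a : ℤ) (l : List ℤ) : hjcf (a :: l) = (a : ℚ) - (hjcf l)⁻¹ := rfl

lemma psi_len_sum : ∀ (l : List ℤ) (j : ℕ), 1 ≤ j → j ≤ l.length →
    (psi j l).length = l.length + 1 ∧ (psi j l).sum ≤ l.sum + 3 := by
  intro l
  induction l with
  | nil => intro j h1 h2; simp at h2; omega
  | cons a t ih =>
    intro j h1 h2
    match j, h1 with
    | 1, _ =>
      match t with
      | [] => simp [psi]
      | b :: t' => simp [psi]; omega
    | (j' + 2), _ =>
      have h' : 1 ≤ j' + 1 := by omega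
      have h'' : j' + 1 ≤ t.length := by simpa using h2
      obtain ⟨hl, hs⟩ := ih (j' + 1) h' h''
      constructor
      · simp [psi, hl]
      · simp [psi]; omega

lemma uTuple_len_sum (l : ℕ) (hl : 1 ≤ l) :
    ((uTuple l).sum : ℤ) - 2 * (((uTuple l).length : ℤ) - 1) = 0 := by
  by_cases h : l ≤ 1
  · simp [uTuple, h]
  · simp [uTuple, h, List.sum_append, List.sum_replicate]
    push_cast
    omega

lemma reaches_lb : ∀ {s : ℕ} {a n : List ℤ}, ReachesIn s a n →
    n.sum - 2 * ((n.length : ℤ) - 1) ≤ a.sum - 2 * ((a.length : ℤ) - 1) + s := by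
  intro s a n h
  induction h with
  | refl l => simp
  | step j hj hj' h ih =>
    obtain ⟨hl, hs⟩ := psi_len_sum _ j hj hj'
    push_cast [hl]
    push_cast at ih
    omega

lemma hjcf_ge_two (t : List ℤ) (hne : t ≠ []) (h2 : ∀ x ∈ t, 2 ≤ x) : 1 < hjcf t := by
  induction t with
  | nil => simp at hne
  | cons a t ih =>
    rcases eq_or_ne t [] with rfl | hne'
    · have := h2 a (by simp)
      rw [hjcf_cons]
      simp [hjcf]
      exact_mod_cast (by omega : (1:ℤ) < a)
    · have ht : 1 < hjcf t := ih hne' (fun x hx => h2 x (by simp [hx]))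
      have ha : (2:ℚ) ≤ (a:ℚ) := by exact_mod_cast h2 a (by simp)
      have hinv : (hjcf t)⁻¹ < 1 := by
        rw [inv_lt_one_iff₀]; right; exact ht
      have : 0 < (hjcf t)⁻¹ := inv_pos.mpr (lt_trans one_pos ht)
      rw [hjcf_cons]; linarith

lemma hjcf_concat_one (t : List ℤ) (h2 : ∀ x ∈ t, 2 ≤ x) :
    1 ≤ hjcf (t ++ [1]) ∧ (hjcf (t ++ [1]) = 1 → t = List.replicate t.length 2) := by
  induction t with
  | nil => simp [hjcf]
  | cons a t ih =>
    obtain ⟨h1, heq⟩ := ih (fun x hx => h2 x (by simp [hx]))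
    have ha : (2:ℚ) ≤ (a:ℚ) := by exact_mod_cast h2 a (by simp)
    have hpos : 0 < hjcf (t ++ [1]) := lt_of_lt_of_le one_pos h1
    have hinv1 : (hjcf (t ++ [1]))⁻¹ ≤ 1 := by
      rw [inv_le_one_iff₀]; right; exact h1
    have hinvpos : 0 < (hjcf (t ++ [1]))⁻¹ := inv_pos.mpr hpos
    rw [List.cons_append, hjcf_cons]
    constructor
    · linarith
    · intro he
      have h1' : (hjcf (t ++ [1]))⁻¹ = (a:ℚ) - 1 := by linarith
      have : (a:ℚ) - 1 ≤ 1 := by rw [← h1']; exact hinv1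
      have ha2 : (a:ℚ) = 2 := le_antisymm (by linarith) ha
      have : (hjcf (t ++ [1]))⁻¹ = 1 := by rw [h1', ha2]; norm_num
      have ht1 : hjcf (t ++ [1]) = 1 := by
        field_simp at this; linarith [this]
      have := heq ht1
      have ha2' : a = 2 := by exact_mod_cast ha2
      rw [ha2', List.length_cons, List.replicate_succ]
      exact congrArg (2 :: ·) this

lemma dec_lemma : ∀ t : List ℤ, (∀ x ∈ t.dropLast, x ≠ 1) ∨ ∃ p s, t = p ++ 1 :: s ∧ s ≠ [] := by
  intro t
  induction t with
  | nil => left; simp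
  | cons a t ih =>
    rcases eq_or_ne t [] with rfl | hne
    · left; simp
    · by_cases ha : a = 1
      · right; exact ⟨[], t, by simp [ha], hne⟩
      · rcases ih with h | ⟨p, s, rfl, hs⟩
        · left
          intro x hx
          rw [List.dropLast_cons_of_ne_nil hne] at hx
          rcases List.mem_cons.mp hx with rfl | hx
          · exact ha
          · exact h x hx
        · right; exact ⟨a :: p, s, by simp, hs⟩

lemma psi_append : ∀ (q : List ℤ) (a b : ℤ) (s : List ℤ),
    psi (q.length + 1) (q ++ a :: b :: s) = q ++ (a + 1) :: 1 :: (b + 1) :: s := by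
  intro q
  induction q with
  | nil => intro a b s; simp [psi]
  | cons x q ih => intro a b s; simp [psi, ih a b s]

lemma hjcf_append_congr (r₁ r₂ : List ℤ) (h : hjcf r₁ = hjcf r₂) :
    ∀ q : List ℤ, hjcf (q ++ r₁) = hjcf (q ++ r₂) := by
  intro q
  induction q with
  | nil => simpa
  | cons x q ih => simp [hjcf_cons, ih]

lemma hjcf_pred_cons (b : ℤ) (s : List ℤ) :
    hjcf ((b - 1) :: s) = hjcf (b :: s) - 1 := by
  rw [hjcf_cons, hjcf_cons]; push_cast; ring

lemma core (a b : ℤ) (s' : List ℤ) (hw : 1 < hjcf (b :: s')) :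
    hjcf ((a - 1) :: (b - 1) :: s') = hjcf (a :: 1 :: b :: s') := by
  have key : ∀ w : ℚ, w ≠ 0 → w - 1 ≠ 0 → (1 - w⁻¹)⁻¹ = 1 + (w - 1)⁻¹ := by
    intro w h0 h1
    have hne : 1 - w⁻¹ = (w - 1) / w := by field_simp
    rw [hne, inv_div, div_eq_iff h1]
    field_simp; ring
  simp only [hjcf_cons] at hw ⊢
  push_cast at hw ⊢
  set u := (hjcf s')⁻¹ with hu
  have h0 : (b:ℚ) - u ≠ 0 := by intro h; rw [h] at hw; norm_num at hw
  have h1 : (b:ℚ) - u - 1 ≠ 0 := by intro h; nlinarith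
  rw [key _ h0 h1]
  ring

lemma main_ub : ∀ (k : ℕ) (n : List ℤ), n.length ≤ k → 2 ≤ n.length →
    (∀ x ∈ n, 0 < x) → Admissible n → hjcf n = 0 →
    ∃ s l, 1 ≤ l ∧ ReachesIn s (uTuple l) n ∧
      (s : ℤ) = n.sum - 2 * ((n.length : ℤ) - 1) := by
  intro k
  induction k with
  | zero => intro n h1 h2 _ _ _; omega
  | succ k ih =>
    intro n hk hlen hpos hadm hcf
    obtain ⟨n₁, t, rfl⟩ : ∃ a t, n = a :: t := by
      cases n with
      | nil => simp at hlen
      | cons a t => exact ⟨a, t, rfl⟩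
    have htne : t ≠ [] := by
      intro h; subst h; simp at hlen
    rcases dec_lemma t with hno | ⟨p, s, rfl, hs⟩
    · -- no interior one: n is uTuple
      obtain ⟨t', c, rfl⟩ : ∃ t' c, t = t' ++ [c] := by
        rcases List.eq_nil_or_concat t with h | ⟨t', c, h⟩
        · exact absurd h htne
        · exact ⟨t', c, by simpa using h⟩
      have ht' : ∀ x ∈ t', 2 ≤ x := by
        intro x hx
        have hx1 : x ≠ 1 := hno x (by simpa using hx)
        have hx0 : 0 < x := hpos x (by simp [hx])
        omega
      have hn₁ : 1 ≤ n₁ := hpos n₁ (by simp)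
      have hcf' : (n₁ : ℚ) = (hjcf (t' ++ [c]))⁻¹ := by
        rw [hjcf_cons] at hcf; linarith
      have hc : c = 1 := by
        by_contra hc
        have hc2 : ∀ x ∈ t' ++ [c], 2 ≤ x := by
          intro x hx
          rcases List.mem_append.mp hx with h | h
          · exact ht' x h
          · simp at h
            have := hpos c (by simp)
            omega
        have h2 := hjcf_ge_two (t' ++ [c]) (by simp) hc2
        have hpos' : 0 < hjcf (t' ++ [c]) := by linarith
        have : (hjcf (t' ++ [c]))⁻¹ < 1 := by
          rw [inv_lt_one_iff₀]; right; exact h2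
        rw [← hcf'] at this
        have : (1:ℚ) ≤ (n₁:ℚ) := by exact_mod_cast hn₁
        linarith
      subst hc
      obtain ⟨h1, heq⟩ := hjcf_concat_one t' ht'
      have hle : (hjcf (t' ++ [1]))⁻¹ ≤ 1 := by
        rw [inv_le_one_iff₀]; right; exact h1
      have hge : (1:ℚ) ≤ (n₁:ℚ) := by exact_mod_cast hn₁
      have hn₁1 : (n₁ : ℚ) = 1 := le_antisymm (hcf' ▸ hle) hge
      have ht1 : hjcf (t' ++ [1]) = 1 := by
        have : (hjcf (t' ++ [1]))⁻¹ = 1 := by rw [← hcf', hn₁1]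
        have hpos' : 0 < hjcf (t' ++ [1]) := by linarith
        field_simp at this
        linarith
      have hrep := heq ht1
      have hn₁' : n₁ = 1 := by exact_mod_cast hn₁1
      refine ⟨0, t'.length + 2, by omega, ?_, ?_⟩
      · have h22 : t'.length + 2 - 2 = t'.length := by omega
        have : uTuple (t'.length + 2) = n₁ :: (t' ++ [1]) := by
          rw [uTuple, if_neg (by omega), h22, ← hrep, hn₁']
        rw [← this]
        exact ReachesIn.refl _
      · rw [hn₁', hrep]
        simp [List.sum_replicate]
        push_cast
        ring
    · -- interior one found
      obtain ⟨b, s', rfl⟩ : ∃ b s', s = b :: s' := by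
        cases s with
        | nil => exact absurd rfl hs
        | cons b s' => exact ⟨b, s', rfl⟩
      obtain ⟨q, a, hn⟩ : ∃ q a, n₁ :: (p ++ 1 :: b :: s') = q ++ a :: 1 :: b :: s' := by
        rcases List.eq_nil_or_concat p with h | ⟨p', a, h⟩
        · exact ⟨[], n₁, by simp [h]⟩
        · refine ⟨n₁ :: p', a, ?_⟩
          simp [h]
      rw [hn] at hpos hadm hcf hk hlen ⊢
      clear hn hs htne
      set n := q ++ a :: 1 :: b :: s' with hn
      have hnlen : n.length = q.length + 3 + s'.length := by simp [hn]; omega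
      -- drops of n
      have hdrop : ∀ i : ℕ, n.drop (q.length + i) = (a :: 1 :: b :: s').drop i := by
        intro i; rw [hn, List.drop_append]; simp
      -- w > 1
      have hw0 : 0 < hjcf (b :: s') := by
        have := hadm (q.length + 2) (by omega) (by omega)
        rwa [hdrop 2] at this
      have hw1 : 0 < hjcf (1 :: b :: s') := by
        have := hadm (q.length + 1) (by omega) (by omega)
        rwa [hdrop 1] at this
      set w := hjcf (b :: s') with hwdef
      have hone : hjcf (1 :: b :: s') = 1 - w⁻¹ := by
        rw [hjcf_cons]; norm_num; exact hwdef.symm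
      have hw : 1 < w := by
        rw [hone] at hw1
        have h := mul_inv_cancel₀ (ne_of_gt hw0)
        nlinarith
      -- a ≥ 2
      have hinvgt : 1 < (1 - w⁻¹)⁻¹ := by
        have h1 : 0 < 1 - w⁻¹ := by rwa [hone] at hw1
        have h2 : 1 - w⁻¹ < 1 := by
          have : 0 < w⁻¹ := inv_pos.mpr hw0
          linarith
        have := mul_inv_cancel₀ (ne_of_gt h1)
        nlinarith
      have hz : 0 ≤ hjcf (a :: 1 :: b :: s') := by
        rcases Nat.eq_zero_or_pos q.length with hq | hq
        · have hqnil : q = [] := List.length_eq_zero_iff.mp hq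
          rw [hqnil] at hn
          rw [hn] at hcf
          simp at hcf
          rw [hcf]
        · have h := hadm q.length (by omega) (by omega)
          have h0 := hdrop 0
          simp only [Nat.add_zero, List.drop_zero] at h0
          rw [h0] at h
          linarith
      have ha2 : 2 ≤ a := by
        rw [hjcf_cons, hone] at hz
        have : (1:ℚ) < (a:ℚ) := by linarith
        exact_mod_cast this
      -- b ≥ 2
      have hb2 : 2 ≤ b := by
        have hb1 : 1 ≤ b := hpos b (by simp [hn])
        by_contra hb
        have hb' : b = 1 := by omega
        subst hb'
        have hs'0 : 0 ≤ hjcf s' := by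
          cases s' with
          | nil => simp [hjcf]
          | cons x s'' =>
            have := hadm (q.length + 3) (by omega) (by simp [hnlen])
            have h3 := hdrop 3
            simp at h3
            rw [h3] at this
            linarith
        have : w ≤ 1 := by
          rw [hwdef, hjcf_cons]
          have : 0 ≤ (hjcf s')⁻¹ := inv_nonneg.mpr hs'0
          push_cast
          linarith
        linarith
      -- the blowdown m
      set m := q ++ (a - 1) :: (b - 1) :: s' with hm
      have hmlen : m.length = q.length + 2 + s'.length := by simp [hm]; omega
      have hmdrop : ∀ i : ℕ, m.drop (q.length + i) = ((a - 1) :: (b - 1) :: s').drop i := by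
        intro i; rw [hm, List.drop_append]; simp
      have hcore := core a b s' hw
      have hmcf : hjcf m = 0 := by
        rw [hm, hjcf_append_congr _ _ hcore q, ← hn, hcf]
      have hmpos : ∀ x ∈ m, 0 < x := by
        intro x hx
        rw [hm] at hx
        simp at hx
        rcases hx with h | h | h | h
        · exact hpos x (by simp [hn, h])
        · omega
        · omega
        · exact hpos x (by simp [hn, h])
      have hmadm : Admissible m := by
        intro j hj hjlt
        rw [hmlen] at hjlt
        rcases Nat.lt_or_ge j (q.length + 1) with hcase | hcase
        · -- j ≤ q.length
          have hjq : j ≤ q.length := by omega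
          have e1 : m.drop j = q.drop j ++ (a - 1) :: (b - 1) :: s' := by
            rw [hm, List.drop_append_of_le_length hjq]
          have e2 : n.drop j = q.drop j ++ a :: 1 :: b :: s' := by
            rw [hn, List.drop_append_of_le_length hjq]
          rw [e1, hjcf_append_congr _ _ hcore (q.drop j), ← e2]
          exact hadm j hj (by omega)
        rcases Nat.lt_or_ge j (q.length + 2) with hcase2 | hcase2
        · -- j = q.length + 1
          have hj1 : j = q.length + 1 := by omega
          rw [hj1, hmdrop 1]
          simp only [List.drop_succ_cons, List.drop_zero]
          rw [hjcf_pred_cons]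
          linarith
        · -- j ≥ q.length + 2
          obtain ⟨i, rfl⟩ : ∃ i, j = q.length + 2 + i := ⟨j - q.length - 2, by omega⟩
          have e1 : m.drop (q.length + 2 + i) = s'.drop i := by
            rw [hm, show q.length + 2 + i = q.length + (i + 2) by omega, List.drop_append]
            simp [List.drop_succ_cons]
          have e2 : n.drop (q.length + 3 + i) = s'.drop i := by
            rw [hn, show q.length + 3 + i = q.length + (i + 3) by omega, List.drop_append]
            simp [List.drop_succ_cons]
          rw [e1, ← e2]
          exact hadm _ (by omega) (by omega)
      -- apply IH
      have hmk : m.length ≤ k := by rw [hmlen] at *; omega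
      have hmlen2 : 2 ≤ m.length := by omega
      obtain ⟨s₀, l, hl, hr, hs₀⟩ := ih m hmk hmlen2 hmpos hmadm hmcf
      refine ⟨s₀ + 1, l, hl, ?_, ?_⟩
      · have hstep := ReachesIn.step (q.length + 1) (by omega) (by omega) hr
        have hpsi : psi (q.length + 1) m = n := by
          rw [hm, psi_append, hn]
          norm_num
        rwa [hpsi] at hstep
      · have hsum : m.sum = n.sum - 3 := by
          rw [hm, hn]
          simp [List.sum_append]
          ring
        push_cast [hsum, hmlen, hnlen] at hs₀ ⊢
        omega


/-- For a positive tuple `n ∈ Z_k` with `k ≥ 2`, `hgt n = |n| - 2(k-1)`. -/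
theorem hgt_eq_sum_sub (n : List ℤ) (hlen : 2 ≤ n.length)
    (hpos : ∀ x ∈ n, 0 < x) (hadm : Admissible n) (hcf : hjcf n = 0) :
    (hgt n : ℤ) = n.sum - 2 * ((n.length : ℤ) - 1) := by
  obtain ⟨s₀, l, hl, hr, hs₀⟩ := main_ub n.length n le_rfl hlen hpos hadm hcf
  have hmem : s₀ ∈ {s | ∃ l : ℕ, 1 ≤ l ∧ ReachesIn s (uTuple l) n} := ⟨l, hl, hr⟩
  have hub : hgt n ≤ s₀ := Nat.sInf_le hmem
  obtain ⟨l', hl', hr'⟩ := Nat.sInf_mem (Set.nonempty_of_mem hmem)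
  have hlb := reaches_lb hr'
  have h0 := uTuple_len_sum l' hl'
  have : n.sum - 2 * ((n.length : ℤ) - 1) ≤ (hgt n : ℤ) := by
    rw [hgt]; push_cast at hlb ⊢; linarith
  have : (hgt n : ℤ) ≤ (s₀ : ℤ) := by exact_mod_cast hub
  omega
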